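/- arXiv:math/9512203 — 4 statements merged into one kernel-verified Lean document; each statement's English description precedes it below -/
import Mathlib

section
/- Let E be a complex Banach space and H a bounded linear operator on E such that exp(itH) is an isometry of E for all real t. Then for every unit vector x and every continuous linear functional f with ‖f‖ = 1 and f(x) = 1, the value f(Hx) is real. -/
/-- If `H` is a bounded operator on a complex Banach space such that `exp(itH)` is an
isometry for all real `t`, then for every unit vector `x` and norming functional `f`
(`‖f‖ = 1`, `f x = 1`) the value `f (H x)` is real. -/
theorem stmt1 (E : Type*) [NormedAddCommGroup E] [NormedSpace ℂ E] [CompleteSpace E]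
    (H : E →L[ℂ] E)
    (hherm : ∀ t : ℝ,
      Isometry (⇑(NormedSpace.exp (((t : ℂ) * Complex.I) • H)) : E → E))
    (x : E) (hx : ‖x‖ = 1) (f : E →L[ℂ] ℂ) (hf : ‖f‖ = 1) (hfx : f x = 1) :
    (f (H x)).im = 0 := by
  set A : E →L[ℂ] E := Complex.I • H with hA
  -- ψ : ℂ → ℂ
  have hψ : HasDerivAt (fun u : ℂ => f ((NormedSpace.exp (u • A)) x))
      (f ((NormedSpace.exp ((0 : ℂ) • A) * A) x)) 0 := by
    have h1 : HasDerivAt (fun u : ℂ => NormedSpace.exp (u • A))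
        (NormedSpace.exp ((0 : ℂ) • A) * A) 0 := hasDerivAt_exp_smul_const A 0
    have L : E →L[ℂ] ℂ := f
    exact ((f.comp (ContinuousLinearMap.apply ℂ E x :
      (E →L[ℂ] E) →L[ℂ] E)).hasFDerivAt.comp_hasDerivAt 0 h1)
  have hderiv : f ((NormedSpace.exp ((0 : ℂ) • A) * A) x) = Complex.I * f (H x) := by
    simp [hA, ContinuousLinearMap.smul_apply]
  rw [hderiv] at hψ
  -- restrict to real t
  have hg : HasDerivAt (fun t : ℝ => f ((NormedSpace.exp (((t : ℝ) : ℂ) • A)) x))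
      (Complex.I * f (H x)) 0 := by
    exact_mod_cast hψ.comp_ofReal
  -- real part
  have hh : HasDerivAt (fun t : ℝ => (f ((NormedSpace.exp (((t : ℝ) : ℂ) • A)) x)).re)
      (Complex.I * f (H x)).re 0 :=
    Complex.reCLM.hasFDerivAt.comp_hasDerivAt 0 hg
  -- local max at 0
  have hbound : ∀ t : ℝ, (f ((NormedSpace.exp (((t : ℝ) : ℂ) • A)) x)).re ≤ 1 := by
    intro t
    have hiso : ‖(NormedSpace.exp (((t : ℝ) : ℂ) • A)) x‖ = ‖x‖ := by
      rw [hA, smul_smul]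
      exact (hherm t).norm_map_of_map_zero (map_zero _) x
    calc (f ((NormedSpace.exp (((t : ℝ) : ℂ) • A)) x)).re
        ≤ ‖f ((NormedSpace.exp (((t : ℝ) : ℂ) • A)) x)‖ := Complex.re_le_norm _
      _ ≤ ‖f‖ * ‖(NormedSpace.exp (((t : ℝ) : ℂ) • A)) x‖ := f.le_opNorm _
      _ = 1 := by rw [hf, hiso, hx]; ring
  have h0 : (f ((NormedSpace.exp (((0 : ℝ) : ℂ) • A)) x)).re = 1 := by
    simp [NormedSpace.exp_zero, hfx]
  have hmax : IsLocalMax (fun t : ℝ => (f ((NormedSpace.exp (((t : ℝ) : ℂ) • A)) x)).re) 0 :=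
    Filter.Eventually.of_forall fun t => by
      simpa [hfx] using hbound t
  have hzero : (Complex.I * f (H x)).re = 0 := hmax.hasDerivAt_eq_zero hh
  simpa [Complex.mul_re] using hzero
end

section
/- On a complex Hilbert space, a bounded operator H satisfies ‖exp(itH)‖ = 1 for all real t if and only if H is self-adjoint. -/
open NormedSpace ComplexConjugate

local notation "⟪" x ", " y "⟫" => @inner ℂ _ _ x y

/-- On a (nontrivial) complex Hilbert space, a bounded operator `H` satisfies
`‖exp(itH)‖ = 1` for all real `t` iff `H` is self-adjoint. -/
theorem stmt2 (E : Type*) [NormedAddCommGroup E] [InnerProductSpace ℂ E]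
    [CompleteSpace E] [Nontrivial E] (H : E →L[ℂ] E) :
    (∀ t : ℝ, ‖NormedSpace.exp (((t : ℂ) * Complex.I) • H)‖ = 1) ↔
      IsSelfAdjoint H := by
  set A : E →L[ℂ] E := Complex.I • H with hA
  have hexp : ∀ t : ℝ, exp (t • A) = exp (((t : ℂ) * Complex.I) • H) := by
    intro t
    congr 1
    rw [hA, ← smul_assoc, Complex.real_smul]
  constructor
  · intro h
    have key : ∀ x : E, ⟪H x, x⟫ = ⟪x, H x⟫ := by
      intro x
      -- the curve u t = exp(t A) x has constant norm ‖x‖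
      have hnorm : ∀ t : ℝ, ‖exp (t • A) x‖ = ‖x‖ := by
        intro t
        have h1 : ‖exp (t • A) x‖ ≤ ‖x‖ := by
          calc ‖exp (t • A) x‖ ≤ ‖exp (t • A)‖ * ‖x‖ :=
                ContinuousLinearMap.le_opNorm _ _
            _ = ‖x‖ := by rw [hexp t, h t, one_mul]
        have h2 : ‖x‖ ≤ ‖exp (t • A) x‖ := by
          have hinv : exp ((-t) • A) * exp (t • A) = 1 := by
            let +nondep : NormedAlgebra ℚ (E →L[ℂ] E) := .restrictScalars ℚ ℂ _
            rw [← exp_add_of_commute]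
            · simp
            · exact (Commute.refl _).smul_left _ |>.smul_right _
          calc ‖x‖ = ‖(exp ((-t) • A) * exp (t • A)) x‖ := by rw [hinv]; simp
            _ = ‖exp ((-t) • A) (exp (t • A) x)‖ := rfl
            _ ≤ ‖exp ((-t) • A)‖ * ‖exp (t • A) x‖ :=
                ContinuousLinearMap.le_opNorm _ _
            _ = ‖exp (t • A) x‖ := by rw [hexp (-t), h (-t), one_mul]
        exact le_antisymm h1 h2
      -- derivative of the constant function ⟪u t, u t⟫ at 0
      have hu : HasDerivAt (fun t : ℝ => exp (t • A) x) (A x) 0 := by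
        have hg : HasDerivAt (fun t : ℝ => exp (t • A)) A 0 := by
          simpa using hasDerivAt_exp_smul_const (𝕂 := ℝ) A (0 : ℝ)
        have := ((ContinuousLinearMap.apply ℂ E x).restrictScalars ℝ).hasFDerivAt.comp_hasDerivAt
          (0 : ℝ) hg
        simpa [Function.comp_def] using this
      have hf : HasDerivAt (fun t : ℝ => ⟪exp (t • A) x, exp (t • A) x⟫)
          (⟪exp ((0:ℝ) • A) x, A x⟫ + ⟪A x, exp ((0:ℝ) • A) x⟫) 0 :=
        hu.inner ℂ hu
      have h0 : exp ((0:ℝ) • A) x = x := by simp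
      rw [h0] at hf
      have hconst : (fun t : ℝ => ⟪exp (t • A) x, exp (t • A) x⟫) =
          fun _ : ℝ => ((‖x‖ : ℂ) ^ 2) := by
        funext t
        rw [inner_self_eq_norm_sq_to_K, hnorm t]; norm_cast
      rw [hconst] at hf
      have hzero : ⟪x, A x⟫ + ⟪A x, x⟫ = 0 :=
        hf.unique (hasDerivAt_const 0 _)
      have : Complex.I * ⟪x, H x⟫ + (-Complex.I) * ⟪H x, x⟫ = 0 := by
        have h' := hzero
        simp [hA, inner_smul_left, inner_smul_right, Complex.conj_I] at h'
        linear_combination h'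
      have : Complex.I * (⟪x, H x⟫ - ⟪H x, x⟫) = 0 := by ring_nf; linear_combination this
      have := mul_eq_zero.mp this
      rcases this with h' | h'
      · exact absurd h' Complex.I_ne_zero
      · exact (sub_eq_zero.mp h').symm
    -- conclude self-adjointness
    rw [ContinuousLinearMap.isSelfAdjoint_iff']
    have : ∀ x : E, ⟪(ContinuousLinearMap.adjoint H - H) x, x⟫ = 0 := by
      intro x
      simp only [ContinuousLinearMap.sub_apply, inner_sub_left,
        ContinuousLinearMap.adjoint_inner_left]
      rw [← key x]
      ring
    have h0 : ((ContinuousLinearMap.adjoint H - H : E →L[ℂ] E) : E →ₗ[ℂ] E) = 0 :=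
      (inner_map_self_eq_zero _).mp this
    have : (ContinuousLinearMap.adjoint H - H : E →L[ℂ] E) = 0 := by
      ext x
      exact LinearMap.congr_fun h0 x
    exact sub_eq_zero.mp this
  · intro hH t
    have hskew : ((t : ℂ) * Complex.I) • H ∈ skewAdjoint (E →L[ℂ] E) := by
      rw [skewAdjoint.mem_iff, star_smul, hH.star_eq]
      rw [← neg_smul]
      congr 1
      simp [Complex.ext_iff]
    let +nondep : NormedAlgebra ℚ (E →L[ℂ] E) := .restrictScalars ℚ ℂ _
    have := exp_mem_unitary_of_mem_skewAdjoint hskew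
    exact CStarRing.norm_of_mem_unitary this
end

section
/- In the two-dimensional real normed space whose unit ball is a regular octagon centered at the origin (with a vertex on the positive x-axis), the rotation by angle π/4 is a surjective linear isometry that is not of the form (x,y) ↦ (ε₁ x_{σ(1)}, ε₂ x_{σ(2)}) for signs ε_i and a permutation σ. -/
open Pointwise


open Real

/-- The regular octagon (unit ball) in `ℝ²`, with a vertex on the positive x-axis. -/
noncomputable def octagon : Set (Fin 2 → ℝ) :=
  convexHull ℝ {p | ∃ k : Fin 8, p = ![Real.cos (k * (π / 4)), Real.sin (k * (π / 4))]}

/-- Rotation of the plane by angle `π/4`. -/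
noncomputable def rotEighth (v : Fin 2 → ℝ) : Fin 2 → ℝ :=
  ![v 0 * Real.cos (π / 4) - v 1 * Real.sin (π / 4),
    v 0 * Real.sin (π / 4) + v 1 * Real.cos (π / 4)]

noncomputable def vert (n : ℕ) : Fin 2 → ℝ :=
  ![Real.cos (n * (π / 4)), Real.sin (n * (π / 4))]

lemma rot_vert (n : ℕ) : rotEighth (vert n) = vert (n + 1) := by
  funext i
  fin_cases i <;>
    simp [rotEighth, vert, Nat.cast_add, add_mul, Real.cos_add, Real.sin_add] <;> ring

lemma vert_add_eight (n : ℕ) : vert (n + 8) = vert n := by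
  have h : ((n : ℝ) + 8) * (π / 4) = (n : ℝ) * (π / 4) + 2 * π := by ring
  funext i
  fin_cases i <;>
    simp only [vert, Matrix.cons_val_zero, Matrix.cons_val_one, Matrix.head_cons,
      Nat.cast_add, Nat.cast_ofNat, h, Real.cos_add_two_pi, Real.sin_add_two_pi]

lemma vert_mod (n : ℕ) : vert n = vert (n % 8) := by
  induction n using Nat.strong_induction_on with
  | _ n ih =>
    rcases lt_or_ge n 8 with h | h
    · rw [Nat.mod_eq_of_lt h]
    · obtain ⟨m, rfl⟩ := Nat.exists_eq_add_of_le h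
      rw [add_comm, vert_add_eight, ih m (by omega), Nat.add_mod_right]

noncomputable def rotInv (v : Fin 2 → ℝ) : Fin 2 → ℝ :=
  ![v 0 * Real.cos (π / 4) + v 1 * Real.sin (π / 4),
    -(v 0) * Real.sin (π / 4) + v 1 * Real.cos (π / 4)]

lemma pyth : Real.cos (π / 4) ^ 2 + Real.sin (π / 4) ^ 2 = 1 :=
  Real.cos_sq_add_sin_sq _

lemma sqrt_two_mul_self : Real.sqrt 2 * Real.sqrt 2 = 2 :=
  Real.mul_self_sqrt (by norm_num)

lemma rot_left_inv : Function.LeftInverse rotInv rotEighth := by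
  intro v
  funext i
  fin_cases i <;>
    · simp [rotEighth, rotInv, Real.cos_pi_div_four, Real.sin_pi_div_four]
      first
      | linear_combination (v 0 / 2) * sqrt_two_mul_self
      | linear_combination (v 1 / 2) * sqrt_two_mul_self

lemma rot_right_inv : Function.RightInverse rotInv rotEighth := by
  intro v
  funext i
  fin_cases i <;>
    · simp [rotEighth, rotInv, Real.cos_pi_div_four, Real.sin_pi_div_four]
      first
      | linear_combination (v 0 / 2) * sqrt_two_mul_self
      | linear_combination (v 1 / 2) * sqrt_two_mul_self

lemma rot_linear : IsLinearMap ℝ rotEighth := by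
  constructor
  · intro x y; funext i; fin_cases i <;> simp [rotEighth] <;> ring
  · intro c x; funext i; fin_cases i <;> simp [rotEighth] <;> ring

lemma vertexSet_eq :
    {p : Fin 2 → ℝ | ∃ k : Fin 8, p = ![Real.cos (k * (π / 4)), Real.sin (k * (π / 4))]} =
      {p | ∃ n : ℕ, p = vert n} := by
  ext p
  constructor
  · rintro ⟨k, rfl⟩; exact ⟨(k : ℕ), rfl⟩
  · rintro ⟨n, rfl⟩
    refine ⟨⟨n % 8, Nat.mod_lt _ (by norm_num)⟩, ?_⟩
    rw [vert_mod]
    rfl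

lemma rot_image_vertexSet :
    rotEighth '' {p : Fin 2 → ℝ | ∃ n : ℕ, p = vert n} = {p | ∃ n : ℕ, p = vert n} := by
  ext p
  constructor
  · rintro ⟨q, ⟨n, rfl⟩, rfl⟩; exact ⟨n + 1, rot_vert n⟩
  · rintro ⟨n, rfl⟩
    refine ⟨vert (n + 7), ⟨n + 7, rfl⟩, ?_⟩
    have h8 : n + 7 + 1 = n + 8 := by omega
    rw [rot_vert, h8, vert_add_eight]

lemma rot_image_octagon : rotEighth '' octagon = octagon := by
  rw [octagon, vertexSet_eq, rot_linear.image_convexHull, rot_image_vertexSet]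

lemma gauge_rot (v : Fin 2 → ℝ) : gauge octagon (rotEighth v) = gauge octagon v := by
  rw [gauge_def, gauge_def]
  congr 1
  ext r
  simp only [Set.mem_setOf_eq, Set.mem_sep_iff]
  refine and_congr_right fun _ => ?_
  have hinj : Function.Injective rotEighth := rot_left_inv.injective
  have himg : rotEighth '' (r • octagon) = r • octagon := by
    have : (rot_linear.mk' rotEighth) '' (r • octagon)
        = r • (rot_linear.mk' rotEighth) '' octagon :=
      image_smul_set (rot_linear.mk' rotEighth) r octagon
    exact this.trans (congrArg (fun s => r • s) rot_image_octagon)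
  constructor
  · intro h
    rw [← himg] at h
    obtain ⟨w, hw, hwe⟩ := h
    rwa [← hinj hwe]
  · intro h
    rw [← himg]
    exact ⟨v, h, rfl⟩

/-- In the two-dimensional real normed space whose unit ball is the regular octagon
(norm given by the gauge of the octagon), rotation by `π/4` is a surjective linear
isometry which is not a signed coordinate permutation. -/
theorem stmt6 :
    IsLinearMap ℝ rotEighth ∧ Function.Bijective rotEighth ∧
    (∀ v, gauge octagon (rotEighth v) = gauge octagon v) ∧
    ¬ ∃ (σ : Equiv.Perm (Fin 2)) (ε : Fin 2 → ℝ),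
        (∀ i, ε i = 1 ∨ ε i = -1) ∧
        ∀ (v : Fin 2 → ℝ) (i : Fin 2), rotEighth v i = ε i * v (σ i) := by
  refine ⟨rot_linear, ⟨rot_left_inv.injective, rot_right_inv.surjective⟩, gauge_rot, ?_⟩
  rintro ⟨σ, ε, hε, h⟩
  have h0 := h ![1, 0] 0
  have hc : rotEighth ![1, 0] 0 = Real.cos (π / 4) := by simp [rotEighth]
  rw [hc, Real.cos_pi_div_four] at h0
  have h2 : Real.sqrt 2 ^ 2 = 2 := Real.sq_sqrt (by norm_num)
  have hj : ∀ j : Fin 2, j = 0 ∨ j = 1 := by decide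
  rcases hj (σ 0) with hσ | hσ
  · rw [hσ] at h0
    simp only [Matrix.cons_val_zero, mul_one] at h0
    rcases hε 0 with he | he <;> rw [he] at h0 <;>
      nlinarith [sqrt_two_mul_self, Real.sqrt_nonneg 2]
  · rw [hσ] at h0
    simp only [Matrix.cons_val_one, Matrix.head_cons, Matrix.cons_val_zero, mul_zero] at h0
    nlinarith [sqrt_two_mul_self, Real.sqrt_nonneg 2]
end

section
/- Let E = ℂ^{n+1} with an absolute norm (depending only on the moduli of coordinates), and let t_k(φ) denote the diagonal isometry multiplying the k-th coordinate by e^{iφ} and fixing the others. If T ⊆ ℂ^{n+1} is a real-linear subspace invariant under t_k(φ) for all φ ∈ ℝ, then either every vector in T has vanishing k-th coordinate, or both e_k and i·e_k belong to T. -/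
/-- In `ℂ^{n+1}`, let `t_k(φ)` multiply the `k`-th coordinate by `e^{iφ}`. If a real
subspace `T` is invariant under `t_k(φ)` for all real `φ`, then either every vector of
`T` has vanishing `k`-th coordinate, or both `e_k` and `i e_k` belong to `T`. -/
theorem stmt9 (n : ℕ) (k : Fin (n + 1)) (T : Submodule ℝ (Fin (n + 1) → ℂ))
    (hT : ∀ φ : ℝ, ∀ v ∈ T,
      (fun i => if i = k then Complex.exp (Complex.I * φ) * v i else v i) ∈ T) :
    (∀ v ∈ T, v k = 0) ∨
      ((Pi.single k (1 : ℂ) : Fin (n + 1) → ℂ) ∈ T ∧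
        (Pi.single k (Complex.I) : Fin (n + 1) → ℂ) ∈ T) := by
  by_cases h : ∀ v ∈ T, v k = 0
  · exact Or.inl h
  · right
    push_neg at h
    obtain ⟨v, hv, hvk⟩ := h
    have h2 : (Pi.single k (2 * v k) : Fin (n + 1) → ℂ) ∈ T := by
      have hw := hT Real.pi v hv
      have hsub := T.sub_mem hv hw
      convert hsub using 1
      funext i
      by_cases hi : i = k
      · subst hi
        simp only [Pi.single_eq_same, Pi.sub_apply, if_pos rfl,
          mul_comm Complex.I (Real.pi : ℂ), Complex.exp_pi_mul_I, if_true]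
        ring
      · simp [Pi.single_eq_of_ne hi, hi]
    have hphi : ∀ φ : ℝ,
        (Pi.single k (Complex.exp (Complex.I * φ) * (2 * v k)) : Fin (n + 1) → ℂ) ∈ T := by
      intro φ
      have := hT φ _ h2
      convert this using 1
      funext i
      by_cases hi : i = k
      · subst hi; simp
      · simp [Pi.single_eq_of_ne hi, hi]
    have key : ∀ c : ℂ, (Pi.single k (c * v k) : Fin (n + 1) → ℂ) ∈ T := by
      intro c
      have := T.smul_mem (‖c‖ / 2) (hphi (Complex.arg c))
      convert this using 1
      funext i
      by_cases hi : i = k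
      · subst hi
        simp only [Pi.single_eq_same, Pi.smul_apply, Complex.real_smul,
          Complex.ofReal_div]
        rw [mul_comm Complex.I (Complex.arg c : ℂ)]
        calc c * v i = (↑(‖c‖) * Complex.exp (↑c.arg * Complex.I)) * v i := by
              rw [Complex.norm_mul_exp_arg_mul_I]
          _ = ↑(‖c‖) / ↑(2:ℝ) * (Complex.exp (↑c.arg * Complex.I) * (2 * v i)) := by
              push_cast; ring
      · simp [Pi.single_eq_of_ne hi, hi]
    constructor
    · have := key (v k)⁻¹
      rwa [inv_mul_cancel₀ hvk] at this
    · have := key (Complex.I * (v k)⁻¹)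
      rwa [mul_assoc, inv_mul_cancel₀ hvk, mul_one] at this
end
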